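/- Suppose every event is modifying and the causal order is compatible with real time. Let τ be a time and let s be a snapshot whose acquisition times all satisfy τ ≤ s(r).t. If s satisfies restrictive integrity with respect to τ, then the cut of s equals the set {e : E | rt e ≤ τ}, and in particular the cut of s is causally consistent. -/
import Mathlib

/-- If every event is modifying, the causal order is compatible with real time,
all acquisition times of `s` satisfy `τ ≤ s(r).t`, and `s` satisfies restrictive
integrity with respect to `τ`, then the cut of `s` equals `{e | rt e ≤ τ}` and,
in particular, the cut of `s` is causally consistent. -/
theorem restrictiveIntegrity_cut_eq_and_causallyConsistent
    (R V E : Type*) (m : R → ℕ → V)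
    (reg : E → R) (rt : E → ℕ) (prec : E → E → Prop)
    (htrans : Transitive prec)
    (hcompat : ∀ e f, prec e f → rt e ≤ rt f)
    (hmod : ∀ e : E, 0 < rt e → m (reg e) (rt e) ≠ m (reg e) (rt e - 1))
    (τ : ℕ) (s : R → V × ℕ)
    (hτ : ∀ r, τ ≤ (s r).2)
    (hrestr : ∀ r, τ ≤ (s r).2 → ∀ t', τ ≤ t' → t' ≤ (s r).2 → (s r).1 = m r t') :
    {e : E | rt e ≤ (s (reg e)).2} = {e : E | rt e ≤ τ} ∧
      ∀ e ∈ {e : E | rt e ≤ (s (reg e)).2},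
        ∀ e', prec e' e → e' ∈ {e : E | rt e ≤ (s (reg e)).2} := by
  have hcut : {e : E | rt e ≤ (s (reg e)).2} = {e : E | rt e ≤ τ} := by
    ext e
    simp only [Set.mem_setOf_eq]
    constructor
    · intro he
      by_contra h
      push_neg at h
      have hpos : 0 < rt e := lt_of_le_of_lt (Nat.zero_le τ) h
      have h1 : (s (reg e)).1 = m (reg e) (rt e) :=
        hrestr _ (hτ _) _ (le_of_lt h) he
      have h2 : (s (reg e)).1 = m (reg e) (rt e - 1) :=
        hrestr _ (hτ _) _ (Nat.le_sub_one_of_lt h) (le_trans (Nat.sub_le _ _) he)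
      exact hmod e hpos (h1 ▸ h2)
    · intro he
      exact le_trans he (hτ _)
  refine ⟨hcut, ?_⟩
  intro e he e' hprec
  rw [Set.ext_iff] at hcut
  exact (hcut e').2 (le_trans (hcompat _ _ hprec) ((hcut e).1 he))
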